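/- Let H_J = σ_x^1 + Σ_{k=1}^{N−1} σ_x^k σ_x^{k+1} + σ_x^N and H_h = Σ_{k=1}^N σ_z^k on an N-qubit chain, extended by two edge ancilla qubits to the Hamiltonians H̃_J = i Σ_{k=0}^{N} γ_{2k+1}γ_{2k+2} and H̃_h = i Σ_{k=1}^{N} γ_{2k}γ_{2k+1} in Jordan-Wigner Majorana form. Then the unitary (e^{iπH̃_h/4}·e^{iπH̃_J/4})^{N+1} maps γ_0 ↦ γ_0, γ_{2N+3} ↦ γ_{2N+3}, and γ_k ↦ (−1)^{k−1}γ_{2N+3−k} for 1 ≤ k ≤ 2N+2. -/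

import Mathlib

noncomputable section
open scoped Matrix

/-- Configuration space of a chain of `n` qubits. -/
abbrev Cfg (n : ℕ) := Fin n → Fin 2

/-- Operators on a chain of `n` qubits. -/
abbrev Op (n : ℕ) := Matrix (Cfg n) (Cfg n) ℂ

def pX : Matrix (Fin 2) (Fin 2) ℂ := !![0, 1; 1, 0]
def pY : Matrix (Fin 2) (Fin 2) ℂ := !![0, -Complex.I; Complex.I, 0]
def pZ : Matrix (Fin 2) (Fin 2) ℂ := !![1, 0; 0, -1]

/-- The single-qubit operator `P` acting on site `j` (identity elsewhere). -/
def site {n : ℕ} (P : Matrix (Fin 2) (Fin 2) ℂ) (j : Fin n) : Op n :=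
  fun f g => if ∀ i, i ≠ j → f i = g i then P (f j) (g j) else 0

/-- The Jordan-Wigner parity string `∏_{j=0}^{k-1} (−σ_z^j)` over sites `j < k`. -/
def parityBelow (n : ℕ) : ℕ → Op n
  | 0 => 1
  | k + 1 => parityBelow n k * (if h : k < n then -(site pZ ⟨k, h⟩) else 1)

/-- The Jordan-Wigner Majorana operator:
`γ_{2k} = (∏_{j<k}(−σ_z^j))σ_x^k`, `γ_{2k+1} = (∏_{j<k}(−σ_z^j))σ_y^k`. -/
def maj (n : ℕ) (m : ℕ) : Op n :=
  if h : m / 2 < n then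
    parityBelow n (m / 2) * site (if m % 2 = 0 then pX else pY) ⟨m / 2, h⟩
  else 0


/-- The extended Ising Hamiltonian `H̃_J = i Σ_{k=0}^{N} γ_{2k+1} γ_{2k+2}`. -/
def HJtil (N : ℕ) : Op (N + 2) :=
  Complex.I • ∑ k ∈ Finset.range (N + 1), maj (N + 2) (2 * k + 1) * maj (N + 2) (2 * k + 2)

/-- The extended field Hamiltonian `H̃_h = i Σ_{k=1}^{N} γ_{2k} γ_{2k+1}`. -/
def Hhtil (N : ℕ) : Op (N + 2) :=
  Complex.I • ∑ k ∈ Finset.range N,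
    maj (N + 2) (2 * (k + 1)) * maj (N + 2) (2 * (k + 1) + 1)

section SiteLemmas

variable {n : ℕ}

lemma site_one (j : Fin n) : site (1 : Matrix (Fin 2) (Fin 2) ℂ) j = 1 := by
  ext f g
  by_cases h2 : ∀ i, i ≠ j → f i = g i
  · by_cases hj : f j = g j
    · have hfg : f = g := funext fun i => by
        by_cases hij : i = j
        · subst hij; exact hj
        · exact h2 i hij
      simp [site, h2, hj, hfg, Matrix.one_apply]
    · have hfg : f ≠ g := fun h => hj (congrFun h j)
      simp [site, h2, hj, hfg, Matrix.one_apply]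
  · have hfg : f ≠ g := fun h => h2 (fun i _ => congrFun h i)
    simp [site, h2, hfg, Matrix.one_apply]

lemma site_neg (P : Matrix (Fin 2) (Fin 2) ℂ) (j : Fin n) : site (-P) j = -(site P j) := by
  ext f g
  simp only [site, Matrix.neg_apply]
  split <;> simp

lemma site_mul_same (P Q : Matrix (Fin 2) (Fin 2) ℂ) (j : Fin n) :
    site P j * site Q j = site (P * Q) j := by
  ext f g
  rw [Matrix.mul_apply]
  by_cases hfg : ∀ i, i ≠ j → f i = g i
  · have key : ∀ a : Fin 2,
        site P j f (Function.update f j a) * site Q j (Function.update f j a) g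
          = P (f j) a * Q a (g j) := by
      intro a
      have h1 : ∀ i, i ≠ j → f i = Function.update f j a i := fun i hi => by
        rw [Function.update_of_ne hi]
      have h2 : ∀ i, i ≠ j → Function.update f j a i = g i := fun i hi => by
        rw [Function.update_of_ne hi]; exact hfg i hi
      simp only [site, Function.update_self]
      rw [if_pos h2, if_pos h1]
    have hsub : (Finset.univ : Finset (Cfg n)) =
        insert (Function.update f j 0) {Function.update f j 1} ∪
          (Finset.univ \ insert (Function.update f j 0) {Function.update f j 1}) := by
      rw [Finset.union_sdiff_of_subset (Finset.subset_univ _)]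
    have hne : Function.update f j (0 : Fin 2) ≠ Function.update f j 1 := by
      intro h
      have := congrFun h j
      simp [Function.update_self] at this
    rw [← Finset.sum_subset (Finset.subset_univ
        ({Function.update f j 0, Function.update f j 1} : Finset (Cfg n)))]
    · rw [Finset.sum_pair hne, key, key, site]
      rw [if_pos hfg, Matrix.mul_apply, Fin.sum_univ_two]
    · intro h _ hh
      simp only [Finset.mem_insert, Finset.mem_singleton] at hh
      push_neg at hh
      by_cases hcond : ∀ i, i ≠ j → f i = h i
      · exfalso
        have : h = Function.update f j (h j) := funext fun i => by
          by_cases hij : i = j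
          · subst hij; simp [Function.update_self]
          · rw [Function.update_of_ne hij]; exact (hcond i hij).symm
        have hj2 : h j = 0 ∨ h j = 1 := by omega
        rcases hj2 with h0 | h0 <;> rw [h0] at this
        · exact hh.1 this
        · exact hh.2 this
      · simp [site, hcond]
  · rw [site, if_neg hfg]
    apply Finset.sum_eq_zero
    intro h _
    by_cases h1 : ∀ i, i ≠ j → f i = h i
    · by_cases h2 : ∀ i, i ≠ j → h i = g i
      · exact absurd (fun i hi => (h1 i hi).trans (h2 i hi)) hfg
      · simp [site, h2]
    · simp [site, h1]

lemma site_mul_ne {j k : Fin n} (hjk : j ≠ k) (P Q : Matrix (Fin 2) (Fin 2) ℂ) :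
    site P j * site Q k = fun f g =>
      if ∀ i, i ≠ j → i ≠ k → f i = g i then P (f j) (g j) * Q (f k) (g k) else 0 := by
  funext f g
  rw [Matrix.mul_apply]
  by_cases hfg : ∀ i, i ≠ j → i ≠ k → f i = g i
  · rw [if_pos hfg]
    rw [Fintype.sum_eq_single (Function.update f j (g j))]
    · have h1 : ∀ i, i ≠ j → f i = Function.update f j (g j) i := fun i hi => by
        rw [Function.update_of_ne hi]
      have h2 : ∀ i, i ≠ k → Function.update f j (g j) i = g i := fun i hi => by
        by_cases hij : i = j
        · subst hij; simp [Function.update_self]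
        · rw [Function.update_of_ne hij]; exact hfg i hij hi
      have hk : Function.update f j (g j) k = f k := Function.update_of_ne (Ne.symm hjk) _ _
      simp only [site, Function.update_self, hk]
      rw [if_pos h2, if_pos h1]
    · intro h hne
      by_cases h1 : ∀ i, i ≠ j → f i = h i
      · by_cases h2 : ∀ i, i ≠ k → h i = g i
        · exfalso
          apply hne
          funext i
          by_cases hij : i = j
          · subst hij; rw [Function.update_self]; exact (h2 i hjk).symm ▸ rfl
          · rw [Function.update_of_ne hij]; exact (h1 i hij).symm
        · simp [site, h2]
      · simp [site, h1]
  · rw [if_neg hfg]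
    apply Finset.sum_eq_zero
    intro h _
    by_cases h1 : ∀ i, i ≠ j → f i = h i
    · by_cases h2 : ∀ i, i ≠ k → h i = g i
      · exfalso
        apply hfg
        intro i hij hik
        exact (h1 i hij).trans (h2 i hik)
      · simp [site, h2]
    · simp [site, h1]

lemma site_commute {j k : Fin n} (hjk : j ≠ k) (P Q : Matrix (Fin 2) (Fin 2) ℂ) :
    Commute (site P j) (site Q k) := by
  unfold Commute SemiconjBy
  rw [site_mul_ne hjk, site_mul_ne (Ne.symm hjk)]
  funext f g
  by_cases hc : ∀ i, i ≠ j → i ≠ k → f i = g i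
  · have hc' : ∀ i, i ≠ k → i ≠ j → f i = g i := fun i h1 h2 => hc i h2 h1
    rw [if_pos hc, if_pos hc', mul_comm]
  · have hc' : ¬ ∀ i, i ≠ k → i ≠ j → f i = g i := fun h => hc (fun i h1 h2 => h i h2 h1)
    rw [if_neg hc, if_neg hc']

lemma site_conjTranspose (P : Matrix (Fin 2) (Fin 2) ℂ) (j : Fin n) :
    (site P j)ᴴ = site Pᴴ j := by
  ext f g
  simp only [Matrix.conjTranspose_apply, site, Matrix.conjTranspose_apply]
  by_cases hc : ∀ i, i ≠ j → f i = g i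
  · have hc' : ∀ i, i ≠ j → g i = f i := fun i hi => (hc i hi).symm
    rw [if_pos hc, if_pos hc']
  · have hc' : ¬ ∀ i, i ≠ j → g i = f i := fun h => hc fun i hi => (h i hi).symm
    rw [if_neg hc, if_neg hc']
    exact star_zero _

end SiteLemmas
section PauliFacts

lemma pX_mul_pX : pX * pX = 1 := by
  ext i j
  fin_cases i <;> fin_cases j <;>
    simp [pX, Matrix.mul_apply, Fin.sum_univ_two, Matrix.one_apply]

lemma pY_mul_pY : pY * pY = 1 := by
  ext i j
  fin_cases i <;> fin_cases j <;>
    simp [pY, Matrix.mul_apply, Fin.sum_univ_two, Matrix.one_apply, Complex.I_mul_I]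

lemma pZ_mul_pZ : pZ * pZ = 1 := by
  ext i j
  fin_cases i <;> fin_cases j <;>
    simp [pZ, Matrix.mul_apply, Fin.sum_univ_two, Matrix.one_apply]

lemma pX_conjTranspose : pXᴴ = pX := by
  ext i j
  fin_cases i <;> fin_cases j <;> simp [pX, Matrix.conjTranspose_apply]

lemma pY_conjTranspose : pYᴴ = pY := by
  ext i j
  fin_cases i <;> fin_cases j <;> simp [pY, Matrix.conjTranspose_apply]

lemma pZ_conjTranspose : pZᴴ = pZ := by
  ext i j
  fin_cases i <;> fin_cases j <;> simp [pZ, Matrix.conjTranspose_apply]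

lemma pX_mul_pZ : pX * pZ = -(pZ * pX) := by
  ext i j
  fin_cases i <;> fin_cases j <;>
    simp [pX, pZ, Matrix.mul_apply, Fin.sum_univ_two, Matrix.neg_apply]

lemma pY_mul_pZ : pY * pZ = -(pZ * pY) := by
  ext i j
  fin_cases i <;> fin_cases j <;>
    simp [pY, pZ, Matrix.mul_apply, Fin.sum_univ_two, Matrix.neg_apply]

lemma pX_mul_pY : pX * pY = -(pY * pX) := by
  ext i j
  fin_cases i <;> fin_cases j <;>
    simp [pX, pY, Matrix.mul_apply, Fin.sum_univ_two, Matrix.neg_apply]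

end PauliFacts
section ParityLemmas

variable {n : ℕ}

/-- `parityBelow` commutes with any `pZ` site. -/
lemma parityBelow_commute_pZ (k : ℕ) (j : Fin n) :
    Commute (parityBelow n k) (site pZ j) := by
  induction k with
  | zero => exact Commute.one_left _
  | succ k ih =>
    rw [parityBelow]
    refine Commute.mul_left ih ?_
    split
    · refine Commute.neg_left ?_
      rename_i h
      by_cases hj : (⟨k, h⟩ : Fin n) = j
      · rw [hj]; exact Commute.refl _
      · exact site_commute hj _ _
    · exact Commute.one_left _

/-- `parityBelow` commutes with any site whose index is at least `k`. -/
lemma parityBelow_commute_ge {k : ℕ} {j : Fin n} (hj : k ≤ (j : ℕ))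
    (Q : Matrix (Fin 2) (Fin 2) ℂ) :
    Commute (parityBelow n k) (site Q j) := by
  induction k with
  | zero => exact Commute.one_left _
  | succ k ih =>
    rw [parityBelow]
    refine Commute.mul_left (ih (by omega)) ?_
    split
    · refine Commute.neg_left ?_
      refine site_commute ?_ _ _
      intro h
      have : ((⟨k, by assumption⟩ : Fin n) : ℕ) = (j : ℕ) := by rw [h]
      simp at this
      omega
    · exact Commute.one_left _

lemma parityBelow_commute (k l : ℕ) :
    Commute (parityBelow n k) (parityBelow n l) := by
  induction l with
  | zero => exact Commute.one_right _
  | succ l ih =>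
    rw [parityBelow]
    refine Commute.mul_right ih ?_
    split
    · exact ((parityBelow_commute_pZ k _)).neg_right
    · exact Commute.one_right _

/-- `parityBelow n k` anticommutes with an `X`/`Y` site at index `j < k`. -/
lemma parityBelow_anticommute {P : Matrix (Fin 2) (Fin 2) ℂ}
    (hP : P * pZ = -(pZ * P)) {k : ℕ} {j : Fin n} (hj : (j : ℕ) < k) :
    parityBelow n k * site P j = -(site P j * parityBelow n k) := by
  induction k with
  | zero => omega
  | succ k ih =>
    rw [parityBelow]
    by_cases hjk : (j : ℕ) < k
    · have hcomm : Commute (if h : k < n then -(site pZ ⟨k, h⟩) else 1) (site P j) := by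
        split
        · refine Commute.neg_left ?_
          refine site_commute ?_ _ _
          intro h
          have : k = (j : ℕ) := by rw [← h]
          omega
        · exact Commute.one_left _
      rw [mul_assoc, hcomm.eq, ← mul_assoc, ih hjk, neg_mul, mul_assoc]
    · -- j = k
      have hjk' : (j : ℕ) = k := by omega
      have hkn : k < n := hjk' ▸ j.isLt
      rw [dif_pos hkn]
      have hfj : (⟨k, hkn⟩ : Fin n) = j := by
        apply Fin.ext
        simp [hjk']
      rw [hfj]
      have hzp : site pZ j * site P j = -(site P j * site pZ j) := by
        rw [site_mul_same, site_mul_same, ← site_neg]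
        congr 1
        rw [hP, neg_neg]
      have hPk : Commute (parityBelow n k) (site P j) :=
        parityBelow_commute_ge (by omega) P
      have hZk : Commute (parityBelow n k) (site pZ j) := parityBelow_commute_pZ _ _
      calc parityBelow n k * -(site pZ j) * site P j
          = parityBelow n k * -(site pZ j * site P j) := by
            rw [mul_assoc, neg_mul]
        _ = parityBelow n k * (site P j * site pZ j) := by rw [hzp, neg_neg]
        _ = (parityBelow n k * site P j) * site pZ j := by rw [mul_assoc]
        _ = (site P j * parityBelow n k) * site pZ j := by rw [hPk.eq]
        _ = site P j * (parityBelow n k * site pZ j) := by rw [mul_assoc]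
        _ = -(site P j * (parityBelow n k * -(site pZ j))) := by
            rw [mul_neg, mul_neg, neg_neg]

lemma parityBelow_sq {k : ℕ} (hk : k ≤ n) :
    parityBelow n k * parityBelow n k = 1 := by
  induction k with
  | zero => rw [parityBelow]; simp
  | succ k ih =>
    have hkn : k < n := by omega
    rw [parityBelow, dif_pos hkn]
    have hc : Commute (parityBelow n k) (-(site pZ ⟨k, hkn⟩)) :=
      (parityBelow_commute_pZ k _).neg_right
    calc parityBelow n k * -(site pZ ⟨k, hkn⟩) * (parityBelow n k * -(site pZ ⟨k, hkn⟩))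
        = parityBelow n k * (-(site pZ ⟨k, hkn⟩) * parityBelow n k) * -(site pZ ⟨k, hkn⟩) := by
          rw [mul_assoc, mul_assoc, mul_assoc]
      _ = parityBelow n k * (parityBelow n k * -(site pZ ⟨k, hkn⟩)) * -(site pZ ⟨k, hkn⟩) := by
          rw [hc.eq]
      _ = (parityBelow n k * parityBelow n k) * (-(site pZ ⟨k, hkn⟩) * -(site pZ ⟨k, hkn⟩)) := by
          rw [← mul_assoc, mul_assoc]
      _ = 1 := by
          rw [ih (by omega)]
          simp [site_mul_same, pZ_mul_pZ, site_one]

lemma parityBelow_conjTranspose (k : ℕ) :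
    (parityBelow n k)ᴴ = parityBelow n k := by
  induction k with
  | zero => rw [parityBelow]; simp
  | succ k ih =>
    rw [parityBelow]
    split
    · rw [Matrix.conjTranspose_mul, Matrix.conjTranspose_neg, site_conjTranspose,
        pZ_conjTranspose, ih]
      exact ((parityBelow_commute_pZ k _).neg_right).eq.symm
    · simp [ih]

end ParityLemmas
section MajLemmas

variable {n : ℕ}

/-- The Pauli matrix used at the site of `maj n m`. -/
def sig (m : ℕ) : Matrix (Fin 2) (Fin 2) ℂ := if m % 2 = 0 then pX else pY

lemma maj_eq {m : ℕ} (hm : m / 2 < n) :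
    maj n m = parityBelow n (m / 2) * site (sig m) ⟨m / 2, hm⟩ := by
  rw [maj, dif_pos hm, sig]

lemma sig_mul_sig (m : ℕ) : sig m * sig m = 1 := by
  rw [sig]; split <;> simp [pX_mul_pX, pY_mul_pY]

lemma sig_conjTranspose (m : ℕ) : (sig m)ᴴ = sig m := by
  rw [sig]; split <;> simp [pX_conjTranspose, pY_conjTranspose]

lemma sig_mul_pZ (m : ℕ) : sig m * pZ = -(pZ * sig m) := by
  rw [sig]; split <;> simp [pX_mul_pZ, pY_mul_pZ]

lemma maj_mul_self {m : ℕ} (hm : m / 2 < n) :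
    maj n m * maj n m = 1 := by
  rw [maj_eq hm]
  set P := parityBelow n (m / 2)
  set j : Fin n := ⟨m / 2, hm⟩ with hj
  have hc : Commute P (site (sig m) j) := parityBelow_commute_ge (by simp [hj]) _
  calc P * site (sig m) j * (P * site (sig m) j)
      = P * ((site (sig m) j * P) * site (sig m) j) := by
        rw [mul_assoc, ← mul_assoc (site (sig m) j)]
    _ = P * ((P * site (sig m) j) * site (sig m) j) := by rw [← hc.eq]
    _ = (P * P) * (site (sig m) j * site (sig m) j) := by
        rw [mul_assoc P, ← mul_assoc, ← mul_assoc]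
    _ = 1 := by
        rw [parityBelow_sq (by omega), site_mul_same, sig_mul_sig, site_one, one_mul]

lemma maj_conjTranspose (m : ℕ) : (maj n m)ᴴ = maj n m := by
  by_cases hm : m / 2 < n
  · rw [maj_eq hm, Matrix.conjTranspose_mul, site_conjTranspose, sig_conjTranspose,
      parityBelow_conjTranspose]
    exact (parityBelow_commute_ge (le_refl _) _).eq.symm
  · rw [maj, dif_neg hm]
    simp

/-- Anticommutation for `a < b`. -/
lemma maj_anticomm_lt {a b : ℕ} (ha : a / 2 < n) (hb : b / 2 < n) (hab : a < b) :
    maj n a * maj n b = -(maj n b * maj n a) := by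
  rw [maj_eq ha, maj_eq hb]
  by_cases hd : a / 2 = b / 2
  · -- same site: a even, b = a + 1
    have ha2 : a % 2 = 0 := by omega
    have hb2 : b % 2 = 1 := by omega
    have hsa : sig a = pX := by rw [sig, if_pos ha2]
    have hsb : sig b = pY := by rw [sig, hb2]; simp
    have hfin : (⟨b / 2, hb⟩ : Fin n) = ⟨a / 2, ha⟩ := by
      apply Fin.ext; simp [hd]
    rw [hfin, show parityBelow n (b / 2) = parityBelow n (a / 2) from by rw [hd]]
    set P := parityBelow n (a / 2)
    set j : Fin n := ⟨a / 2, ha⟩ with hj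
    have hc : ∀ Q : Matrix (Fin 2) (Fin 2) ℂ, Commute P (site Q j) := fun Q =>
      parityBelow_commute_ge (by simp [hj]) _
    have hform : ∀ Q1 Q2 : Matrix (Fin 2) (Fin 2) ℂ,
        (P * site Q1 j) * (P * site Q2 j) = (P * P) * site (Q1 * Q2) j := by
      intro Q1 Q2
      rw [mul_assoc P (site Q1 j), ← mul_assoc (site Q1 j), ← (hc Q1).eq,
        mul_assoc P (site Q1 j), ← mul_assoc P P, site_mul_same]
    rw [hform, hform, hsa, hsb, pX_mul_pY, site_neg, mul_neg]
  · -- different sites, a/2 < b/2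
    have hd2 : a / 2 < b / 2 := by omega
    set Pa := parityBelow n (a / 2)
    set Pb := parityBelow n (b / 2)
    set ja : Fin n := ⟨a / 2, ha⟩ with hja
    set jb : Fin n := ⟨b / 2, hb⟩ with hjb
    set Sa := site (sig a) ja with hSa
    set Sb := site (sig b) jb with hSb
    have h1 : Sa * Pb = -(Pb * Sa) := by
      rw [parityBelow_anticommute (sig_mul_pZ a) (by simpa [hja] using hd2), neg_neg]
    have hPaPb : Commute Pa Pb := parityBelow_commute _ _
    have hSbPa : Commute Pa Sb := parityBelow_commute_ge (by simp [hjb]; omega) _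
    have hSaSb : Commute Sa Sb := by
      refine site_commute ?_ _ _
      intro h
      have : a / 2 = b / 2 := by
        have := congrArg (Fin.val) h
        simpa [hja, hjb] using this
      omega
    have e1 : Pa * Sa * (Pb * Sb) = -(Pa * (Pb * (Sa * Sb))) := by
      rw [mul_assoc, ← mul_assoc Sa Pb Sb, h1, neg_mul, mul_neg, mul_assoc Pb Sa Sb]
    have e2 : Pb * Sb * (Pa * Sa) = Pa * (Pb * (Sa * Sb)) := by
      calc Pb * Sb * (Pa * Sa) = Pb * ((Sb * Pa) * Sa) := by rw [mul_assoc, ← mul_assoc Sb]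
        _ = Pb * ((Pa * Sb) * Sa) := by rw [← hSbPa.eq]
        _ = Pb * (Pa * (Sb * Sa)) := by rw [mul_assoc]
        _ = Pb * (Pa * (Sa * Sb)) := by rw [hSaSb.eq]
        _ = (Pb * Pa) * (Sa * Sb) := by rw [← mul_assoc, ← mul_assoc]
        _ = (Pa * Pb) * (Sa * Sb) := by rw [← hPaPb.eq]
        _ = Pa * (Pb * (Sa * Sb)) := by rw [mul_assoc]
    rw [e1, e2]

lemma maj_anticomm {a b : ℕ} (ha : a / 2 < n) (hb : b / 2 < n) (hab : a ≠ b) :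
    maj n a * maj n b = -(maj n b * maj n a) := by
  rcases lt_or_gt_of_ne hab with h | h
  · exact maj_anticomm_lt ha hb h
  · rw [maj_anticomm_lt hb ha h, neg_neg]

end MajLemmas
section PairLemmas

variable {n : ℕ}

lemma pair_sq {a b : ℕ} (ha : a / 2 < n) (hb : b / 2 < n) (hab : a ≠ b) :
    (maj n a * maj n b) * (maj n a * maj n b) = -1 := by
  calc (maj n a * maj n b) * (maj n a * maj n b)
      = maj n a * ((maj n b * maj n a) * maj n b) := by
        rw [mul_assoc, ← mul_assoc (maj n b)]
    _ = maj n a * (-(maj n a * maj n b) * maj n b) := by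
        rw [maj_anticomm hb ha (Ne.symm hab)]
    _ = -(maj n a * maj n a * (maj n b * maj n b)) := by
        rw [neg_mul, mul_neg, mul_assoc, ← mul_assoc, ← mul_assoc, mul_assoc]
    _ = -1 := by rw [maj_mul_self ha, maj_mul_self hb, one_mul]

lemma pair_conjTranspose {a b : ℕ} (ha : a / 2 < n) (hb : b / 2 < n) (hab : a ≠ b) :
    (maj n a * maj n b)ᴴ = -(maj n a * maj n b) := by
  rw [Matrix.conjTranspose_mul, maj_conjTranspose, maj_conjTranspose,
    maj_anticomm hb ha (Ne.symm hab)]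

/-- A Majorana commutes with a disjoint pair. -/
lemma pair_commute_maj {a b m : ℕ} (ha : a / 2 < n) (hb : b / 2 < n) (hm : m / 2 < n)
    (hma : m ≠ a) (hmb : m ≠ b) :
    Commute (maj n a * maj n b) (maj n m) := by
  unfold Commute SemiconjBy
  calc maj n a * maj n b * maj n m = maj n a * (maj n b * maj n m) := by rw [mul_assoc]
    _ = maj n a * -(maj n m * maj n b) := by rw [maj_anticomm hb hm (fun h => hmb h.symm)]
    _ = -(maj n a * maj n m) * maj n b := by rw [mul_neg, neg_mul, mul_assoc]
    _ = (maj n m * maj n a) * maj n b := by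
        rw [← maj_anticomm hm ha hma]
    _ = maj n m * (maj n a * maj n b) := by rw [mul_assoc]

lemma pair_commute_pair {a b c d : ℕ} (ha : a / 2 < n) (hb : b / 2 < n)
    (hc : c / 2 < n) (hd : d / 2 < n)
    (hca : c ≠ a) (hcb : c ≠ b) (hda : d ≠ a) (hdb : d ≠ b) :
    Commute (maj n a * maj n b) (maj n c * maj n d) :=
  Commute.mul_right (pair_commute_maj ha hb hc hca hcb)
    (pair_commute_maj ha hb hd hda hdb)

end PairLemmas

section ExpLemma

/-- The exponential of `c • A` when `A * A = -1`. -/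
lemma exp_smul_of_sq_neg_one {nn : ℕ} {A : Op nn} (hA : A * A = -1) (c : ℝ) :
    NormedSpace.exp ((c : ℂ) • A) = (Real.cos c : ℂ) • 1 + (Real.sin c : ℂ) • A := by
  letI : SeminormedRing (Op nn) := Matrix.linftyOpSemiNormedRing
  letI : NormedRing (Op nn) := Matrix.linftyOpNormedRing
  letI : NormedAlgebra ℝ (Op nn) := Matrix.linftyOpNormedAlgebra
  have hmul : ∀ z w : ℂ,
      ((z.re : ℂ) • 1 + (z.im : ℂ) • A) * ((w.re : ℂ) • 1 + (w.im : ℂ) • A)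
        = (((z * w).re : ℂ) • (1 : Op nn) + ((z * w).im : ℂ) • A) := by
    intro z w
    rw [mul_add, add_mul, add_mul, smul_mul_smul_comm, smul_mul_smul_comm,
      smul_mul_smul_comm, smul_mul_smul_comm, hA, Complex.mul_re, Complex.mul_im]
    simp only [one_mul, mul_one, smul_neg]
    push_cast
    module
  let φ : ℂ →ₐ[ℝ] Op nn :=
    { toFun := fun z => (z.re : ℂ) • 1 + (z.im : ℂ) • A
      map_one' := by simp
      map_mul' := fun z w => (hmul z w).symm
      map_zero' := by simp
      map_add' := fun z w => by
        simp only [Complex.add_re, Complex.add_im]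
        push_cast
        module
      commutes' := fun r => by
        simp only [Complex.ofReal_re, Complex.ofReal_im, Complex.ofReal_zero, zero_smul,
          add_zero, Algebra.algebraMap_eq_smul_one]
        rw [← Complex.coe_smul]
        norm_num }
  have hφ : Continuous φ := by
    have : Continuous (φ.toLinearMap : ℂ →ₗ[ℝ] Op nn) :=
      LinearMap.continuous_of_finiteDimensional _
    exact this
  have key := NormedSpace.map_exp (φ : ℂ →ₐ[ℝ] Op nn) hφ ((c : ℂ) * Complex.I)
  have hφarg : φ ((c : ℂ) * Complex.I) = (c : ℂ) • A := by
    show ((((c : ℂ) * Complex.I).re : ℂ)) • (1 : Op nn)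
        + ((((c : ℂ) * Complex.I).im : ℂ)) • A = (c : ℂ) • A
    simp
  have hexpC : NormedSpace.exp ((c : ℂ) * Complex.I)
      = Complex.cos c + Complex.sin c * Complex.I := by
    rw [← Complex.exp_eq_exp_ℂ,
      Complex.exp_mul_I]
  have hφval : φ (Complex.cos c + Complex.sin c * Complex.I)
      = (Real.cos c : ℂ) • 1 + (Real.sin c : ℂ) • A := by
    show (((Complex.cos (c:ℂ) + Complex.sin (c:ℂ) * Complex.I).re : ℂ)) • (1 : Op nn)
        + (((Complex.cos (c:ℂ) + Complex.sin (c:ℂ) * Complex.I).im : ℂ)) • A = _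
    rw [← Complex.ofReal_cos, ← Complex.ofReal_sin]
    simp
  calc NormedSpace.exp ((c : ℂ) • A)
      = NormedSpace.exp ((c : ℂ) • A) := by
        rfl
    _ = NormedSpace.exp (φ ((c : ℂ) * Complex.I)) := by rw [hφarg]
    _ = φ (NormedSpace.exp ((c : ℂ) * Complex.I)) := key.symm
    _ = (Real.cos c : ℂ) • 1 + (Real.sin c : ℂ) • A := by rw [hexpC, hφval]

end ExpLemma
section BraidLemmas

variable {n : ℕ}

/-- The braid unitary `(1 - γ_a γ_b)/√2`. -/
def Bop (n a b : ℕ) : Op n := ((Real.sqrt 2 / 2 : ℝ) : ℂ) • (1 - maj n a * maj n b)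

lemma exp_pair {a b : ℕ} (ha : a / 2 < n) (hb : b / 2 < n) (hab : a ≠ b) :
    NormedSpace.exp (((-(Real.pi/4) : ℝ) : ℂ) • (maj n a * maj n b)) = Bop n a b := by
  rw [exp_smul_of_sq_neg_one (pair_sq ha hb hab), Real.cos_neg, Real.sin_neg,
    Real.cos_pi_div_four, Real.sin_pi_div_four, Bop, smul_sub]
  push_cast
  module

lemma Bop_mul_majA {a b : ℕ} (ha : a / 2 < n) (hb : b / 2 < n) (hab : a ≠ b) :
    Bop n a b * maj n a = maj n b * Bop n a b := by
  rw [Bop, Algebra.smul_mul_assoc, Algebra.mul_smul_comm]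
  congr 1
  rw [sub_mul, one_mul, mul_sub, mul_one]
  have h1 : maj n a * maj n b * maj n a = -(maj n b) := by
    rw [mul_assoc, maj_anticomm hb ha (Ne.symm hab), mul_neg, ← mul_assoc,
      maj_mul_self ha, one_mul]
  have h2 : maj n b * (maj n a * maj n b) = -(maj n a) := by
    rw [← mul_assoc, maj_anticomm hb ha (Ne.symm hab), neg_mul, mul_assoc,
      maj_mul_self hb, mul_one]
  rw [h1, h2, sub_neg_eq_add, sub_neg_eq_add, add_comm]

lemma Bop_mul_majB {a b : ℕ} (ha : a / 2 < n) (hb : b / 2 < n) (hab : a ≠ b) :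
    Bop n a b * maj n b = -(maj n a * Bop n a b) := by
  rw [Bop, Algebra.smul_mul_assoc, Algebra.mul_smul_comm, ← smul_neg]
  congr 1
  rw [sub_mul, one_mul, mul_sub, mul_one, mul_assoc, maj_mul_self hb, mul_one,
    ← mul_assoc, maj_mul_self ha, one_mul, neg_sub]

lemma Bop_commute {a b m : ℕ} (ha : a / 2 < n) (hb : b / 2 < n) (hm : m / 2 < n)
    (hma : m ≠ a) (hmb : m ≠ b) :
    Commute (Bop n a b) (maj n m) := by
  refine Commute.smul_left ?_ _
  exact Commute.sub_left (Commute.one_left _) (pair_commute_maj ha hb hm hma hmb)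

end BraidLemmas

section EopLemmas

/-- One term of the exponent. -/
def pairTerm (n c k : ℕ) : Op n :=
  ((-(Real.pi/4) : ℝ) : ℂ) • (maj n (c + 2*k) * maj n (c + 2*k + 1))

/-- Partial product of braids, as an exponential. -/
def Eop (n c r : ℕ) : Op n :=
  NormedSpace.exp (∑ k ∈ Finset.range r, pairTerm n c k)

variable {n : ℕ}

lemma pairTerm_commute {c k l : ℕ} (hk : c + 2*k + 1 < 2*n) (hl : c + 2*l + 1 < 2*n)
    (hkl : k ≠ l) :
    Commute (pairTerm n c k) (pairTerm n c l) := by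
  refine Commute.smul_left (Commute.smul_right ?_ _) _
  exact pair_commute_pair (by omega) (by omega) (by omega) (by omega)
    (by omega) (by omega) (by omega) (by omega)

lemma Eop_zero (c : ℕ) : Eop n c 0 = 1 := by
  rw [Eop, Finset.range_zero, Finset.sum_empty, NormedSpace.exp_zero]

lemma Eop_succ {c r : ℕ} (hcr : c + 2*r + 1 < 2*n) :
    Eop n c (r+1) = Eop n c r * Bop n (c + 2*r) (c + 2*r + 1) := by
  rw [Eop, Finset.sum_range_succ, Matrix.exp_add_of_commute, Eop]
  · rw [pairTerm, exp_pair (by omega) (by omega) (by omega)]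
  · refine Commute.sum_left _ _ _ fun k hk => ?_
    simp only [Finset.mem_range] at hk
    exact pairTerm_commute (by omega) (by omega) (by omega)

lemma Eop_mul_conjTranspose {c r : ℕ} (hcr : c + 2*r < 2*n) :
    Eop n c r * (Eop n c r)ᴴ = 1 := by
  rw [Eop, ← Matrix.exp_conjTranspose]
  have hX : (∑ k ∈ Finset.range r, pairTerm n c k)ᴴ
      = -(∑ k ∈ Finset.range r, pairTerm n c k) := by
    rw [Matrix.conjTranspose_sum, ← Finset.sum_neg_distrib]
    refine Finset.sum_congr rfl fun k hk => ?_
    simp only [Finset.mem_range] at hk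
    rw [pairTerm, Matrix.conjTranspose_smul, Complex.star_def, Complex.conj_ofReal,
      pair_conjTranspose (by omega) (by omega) (by omega), smul_neg]
  rw [hX]
  have h2 := Matrix.exp_add_of_commute
    (∑ k ∈ Finset.range r, pairTerm n c k)
    (-(∑ k ∈ Finset.range r, pairTerm n c k)) ((Commute.refl _).neg_right)
  rw [add_neg_cancel, NormedSpace.exp_zero] at h2
  exact h2.symm

lemma Eop_action {c : ℕ} : ∀ (r : ℕ), c + 2*r < 2*n → ∀ (m : ℕ), m < 2*n →
    Eop n c r * maj n m =
      (if c ≤ m ∧ m < c + 2*r then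
        (if (m - c) % 2 = 0 then maj n (m+1) else (-1:ℂ) • maj n (m-1))
       else maj n m) * Eop n c r := by
  intro r
  induction r with
  | zero =>
    intro _ m _
    rw [Eop_zero, one_mul, mul_one, if_neg (by omega)]
  | succ r ih =>
    intro hcr m hm
    have hcr' : c + 2*r < 2*n := by omega
    rw [Eop_succ (by omega)]
    have hab : c + 2*r ≠ c + 2*r + 1 := by omega
    have ha2 : (c + 2*r) / 2 < n := by omega
    have hb2 : (c + 2*r + 1) / 2 < n := by omega
    by_cases hma : m = c + 2*r
    · subst hma
      rw [mul_assoc, Bop_mul_majA ha2 hb2 hab, ← mul_assoc,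
        ih hcr' (c + 2*r + 1) (by omega), if_neg (by omega),
        if_pos (show c ≤ c + 2*r ∧ c + 2*r < c + 2*(r+1) by omega),
        if_pos (show (c + 2*r - c) % 2 = 0 by omega), mul_assoc]
    · by_cases hmb : m = c + 2*r + 1
      · subst hmb
        rw [mul_assoc, Bop_mul_majB ha2 hb2 hab, mul_neg, ← mul_assoc,
          ih hcr' (c + 2*r) (by omega), if_neg (by omega),
          if_pos (show c ≤ c + 2*r + 1 ∧ c + 2*r + 1 < c + 2*(r+1) by omega),
          if_neg (show ¬ (c + 2*r + 1 - c) % 2 = 0 by omega),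
          show c + 2*r + 1 - 1 = c + 2*r from by omega,
          neg_one_smul, neg_mul, mul_assoc (maj n (c + 2*r))]
      · have hcomm : Commute (Bop n (c + 2*r) (c + 2*r + 1)) (maj n m) :=
          Bop_commute ha2 hb2 (by omega) hma hmb
        rw [mul_assoc, hcomm.eq, ← mul_assoc, ih hcr' m hm]
        by_cases hin : c ≤ m ∧ m < c + 2*r
        · rw [if_pos hin, if_pos (show c ≤ m ∧ m < c + 2*(r+1) by omega), mul_assoc]
        · rw [if_neg hin, if_neg (show ¬(c ≤ m ∧ m < c + 2*(r+1)) by omega), mul_assoc]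

end EopLemmas
section Protocol

lemma Hh_exp (N : ℕ) :
    (Complex.I * ((Real.pi / 4 : ℝ) : ℂ)) • Hhtil N
      = ∑ k ∈ Finset.range N, pairTerm (N+2) 2 k := by
  rw [Hhtil, smul_smul, Finset.smul_sum]
  refine Finset.sum_congr rfl fun k hk => ?_
  rw [pairTerm, show 2*(k+1) = 2 + 2*k from by ring]
  congr 1
  push_cast
  rw [mul_comm Complex.I, mul_assoc, Complex.I_mul_I]
  ring

lemma HJ_exp (N : ℕ) :
    (Complex.I * ((Real.pi / 4 : ℝ) : ℂ)) • HJtil N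
      = ∑ k ∈ Finset.range (N+1), pairTerm (N+2) 1 k := by
  rw [HJtil, smul_smul, Finset.smul_sum]
  refine Finset.sum_congr rfl fun k hk => ?_
  rw [pairTerm, show 2*k+1 = 1 + 2*k from by ring, show 1+2*k+1 = 2+2*k from by ring,
    show 2*k+2 = 2+2*k from by ring]
  congr 1
  push_cast
  rw [mul_comm Complex.I, mul_assoc, Complex.I_mul_I]
  ring

/-- The one-round unitary. -/
def Uop (N : ℕ) : Op (N+2) := Eop (N+2) 2 N * Eop (N+2) 1 (N+1)

lemma Uop_eq (N : ℕ) :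
    NormedSpace.exp ((Complex.I * ((Real.pi / 4 : ℝ) : ℂ)) • Hhtil N) *
      NormedSpace.exp ((Complex.I * ((Real.pi / 4 : ℝ) : ℂ)) • HJtil N) = Uop N := by
  rw [Hh_exp, HJ_exp, Uop, Eop, Eop]

/-- Index map of one round. -/
def gIdx (N m : ℕ) : ℕ :=
  if m % 2 = 1 then (if m = 2*N+1 then 2*N+2 else m + 2)
  else (if m = 2 then 1 else m - 2)

/-- Sign of one round. -/
def gSign (m : ℕ) : ℂ := if m = 2 then -1 else 1

lemma U_action (N : ℕ) (m : ℕ) (h1 : 1 ≤ m) (h2 : m ≤ 2*N+2) :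
    Uop N * maj (N+2) m = gSign m • (maj (N+2) (gIdx N m) * Uop N) := by
  have hJ := Eop_action (n := N+2) (c := 1) (N+1) (by omega) m (by omega)
  rw [if_pos (show 1 ≤ m ∧ m < 1 + 2*(N+1) by omega)] at hJ
  rw [Uop, mul_assoc, hJ]
  by_cases modd : m % 2 = 1
  · rw [if_pos (show (m - 1) % 2 = 0 by omega)] at *
    rw [← mul_assoc, Eop_action (n := N+2) (c := 2) N (by omega) (m+1) (by omega)]
    have hg : gSign m = 1 := by rw [gSign, if_neg (by omega)]
    by_cases hend : m = 2*N+1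
    · rw [if_neg (show ¬(2 ≤ m+1 ∧ m+1 < 2 + 2*N) by omega)]
      have hgi : gIdx N m = m + 1 := by rw [gIdx, if_pos modd, if_pos hend]; omega
      rw [hg, one_smul, hgi, mul_assoc]
    · rw [if_pos (show 2 ≤ m+1 ∧ m+1 < 2 + 2*N by omega),
        if_pos (show (m+1-2) % 2 = 0 by omega)]
      have hgi : gIdx N m = m + 2 := by rw [gIdx, if_pos modd, if_neg hend]
      rw [hg, one_smul, hgi, show m+1+1 = m+2 from by omega, mul_assoc]
  · rw [if_neg (show ¬(m - 1) % 2 = 0 by omega)] at *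
    rw [smul_mul_assoc, mul_smul_comm, ← mul_assoc,
      Eop_action (n := N+2) (c := 2) N (by omega) (m-1) (by omega)]
    by_cases h4 : 4 ≤ m
    · rw [if_pos (show 2 ≤ m-1 ∧ m-1 < 2 + 2*N by omega),
        if_neg (show ¬(m-1-2) % 2 = 0 by omega)]
      have hgi : gIdx N m = m - 2 := by
        rw [gIdx, if_neg modd, if_neg (by omega)]
      have hg : gSign m = 1 := by rw [gSign, if_neg (by omega)]
      rw [hgi, hg, one_smul, show m-1-1 = m-2 from by omega]
      rw [smul_mul_assoc, smul_mul_assoc, smul_smul]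
      norm_num
      rw [mul_assoc]
    · have hm2 : m = 2 := by omega
      subst hm2
      rw [if_neg (show ¬(2 ≤ 2-1 ∧ 2-1 < 2 + 2*N) by omega)]
      have hgi : gIdx N 2 = 1 := by rw [gIdx]; norm_num
      have hg : gSign 2 = -1 := by rw [gSign, if_pos rfl]
      simp only [hgi, hg, neg_one_smul, neg_mul, mul_neg, mul_assoc, neg_neg,
        show (2:ℕ)-1 = 1 from rfl]

/-- Position of Majorana `k` after `r` rounds. -/
def Fidx (N r k : ℕ) : ℕ :=
  if k % 2 = 1 then (if k + 2*r ≤ 2*N+1 then k + 2*r else 4*N+5 - (k+2*r))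
  else (if 2*r < k then k - 2*r else 2*r + 1 - k)

/-- Sign of Majorana `k` after `r` rounds. -/
def Ssign (r k : ℕ) : ℂ := if k % 2 = 0 ∧ k ≤ 2*r then -1 else 1

lemma Fidx_step {N r k : ℕ} (hr : r ≤ N) (hk1 : 1 ≤ k) (hk2 : k ≤ 2*N+2) :
    Fidx N r (gIdx N k) = Fidx N (r+1) k := by
  rw [Fidx, Fidx, gIdx]
  split_ifs <;> omega

lemma Ssign_step {N r k : ℕ} (hr : r ≤ N) (hk1 : 1 ≤ k) (hk2 : k ≤ 2*N+2) :
    gSign k * Ssign r (gIdx N k) = Ssign (r+1) k := by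
  by_cases hk : k % 2 = 1
  · have hgs : gSign k = 1 := by rw [gSign, if_neg (by omega)]
    have hS1 : Ssign (r+1) k = 1 := by rw [Ssign, if_neg (by omega)]
    by_cases hend : k = 2*N+1
    · have hgi : gIdx N k = 2*N+2 := by rw [gIdx, if_pos hk, if_pos hend]
      have hS0 : Ssign r (2*N+2) = 1 := by rw [Ssign, if_neg (by omega)]
      rw [hgs, hgi, hS0, hS1, one_mul]
    · have hgi : gIdx N k = k+2 := by rw [gIdx, if_pos hk, if_neg hend]
      have hS0 : Ssign r (k+2) = 1 := by rw [Ssign, if_neg (by omega)]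
      rw [hgs, hgi, hS0, hS1, one_mul]
  · by_cases h2' : k = 2
    · subst h2'
      have hgi : gIdx N 2 = 1 := by rw [gIdx]; norm_num
      have hSa : Ssign r 1 = 1 := by rw [Ssign, if_neg (by omega)]
      have hSb : Ssign (r+1) 2 = -1 := by rw [Ssign, if_pos (by omega)]
      rw [gSign, if_pos rfl, hgi, hSa, hSb, mul_one]
    · have hgs : gSign k = 1 := by rw [gSign, if_neg h2']
      have hgi : gIdx N k = k - 2 := by rw [gIdx, if_neg hk, if_neg h2']
      rw [hgs, hgi, one_mul, Ssign, Ssign]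
      by_cases hle : k ≤ 2*(r+1)
      · rw [if_pos (show (k-2) % 2 = 0 ∧ k-2 ≤ 2*r by omega),
          if_pos (show k % 2 = 0 ∧ k ≤ 2*(r+1) by omega)]
      · rw [if_neg (show ¬((k-2) % 2 = 0 ∧ k-2 ≤ 2*r) by omega),
          if_neg (show ¬(k % 2 = 0 ∧ k ≤ 2*(r+1)) by omega)]

lemma U_pow_action (N : ℕ) : ∀ r, r ≤ N+1 → ∀ k, 1 ≤ k → k ≤ 2*N+2 →
    (Uop N)^r * maj (N+2) k = Ssign r k • (maj (N+2) (Fidx N r k) * (Uop N)^r) := by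
  intro r
  induction r with
  | zero =>
    intro _ k hk1 hk2
    have hF : Fidx N 0 k = k := by
      rw [Fidx]
      by_cases hk : k % 2 = 1
      · rw [if_pos hk, if_pos (by omega)]; omega
      · rw [if_neg hk, if_pos (by omega)]; omega
    have hS : Ssign 0 k = 1 := by rw [Ssign, if_neg (by omega)]
    rw [pow_zero, one_mul, mul_one, hF, hS, one_smul]
  | succ r ih =>
    intro hr k hk1 hk2
    have hgb1 : 1 ≤ gIdx N k := by rw [gIdx]; split_ifs <;> omega
    have hgb2 : gIdx N k ≤ 2*N+2 := by rw [gIdx]; split_ifs <;> omega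
    rw [pow_succ, mul_assoc, U_action N k hk1 hk2, mul_smul_comm, ← mul_assoc,
      ih (by omega) (gIdx N k) hgb1 hgb2, smul_mul_assoc, smul_smul, mul_assoc,
      ← pow_succ, Fidx_step (by omega) hk1 hk2, Ssign_step (by omega) hk1 hk2]

lemma Uop_unitary (N : ℕ) : Uop N * (Uop N)ᴴ = 1 := by
  rw [Uop, Matrix.conjTranspose_mul, mul_assoc, ← mul_assoc (Eop (N+2) 1 (N+1)),
    Eop_mul_conjTranspose (by omega), one_mul,
    Eop_mul_conjTranspose (by omega)]

lemma Uop_pow_unitary (N r : ℕ) : (Uop N)^r * ((Uop N)^r)ᴴ = 1 := by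
  rw [Matrix.conjTranspose_pow]
  induction r with
  | zero => simp
  | succ r ih =>
    rw [pow_succ, pow_succ']
    rw [mul_assoc, ← mul_assoc (Uop N), Uop_unitary, one_mul, ih]

end Protocol

/-- The time-dependent protocol unitary `(e^{iπH̃_h/4} e^{iπH̃_J/4})^{N+1}`
fixes the edge Majoranas and maps `γ_k ↦ (−1)^{k−1} γ_{2N+3−k}` for
`1 ≤ k ≤ 2N+2`. -/
theorem stmt_18 (N : ℕ) :
    (NormedSpace.exp ((Complex.I * (Real.pi / 4 : ℝ)) • Hhtil N) *
        NormedSpace.exp ((Complex.I * (Real.pi / 4 : ℝ)) • HJtil N)) ^ (N + 1) *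
          maj (N + 2) 0 *
        ((NormedSpace.exp ((Complex.I * (Real.pi / 4 : ℝ)) • Hhtil N) *
          NormedSpace.exp ((Complex.I * (Real.pi / 4 : ℝ)) • HJtil N)) ^ (N + 1))ᴴ =
      maj (N + 2) 0 ∧
    (NormedSpace.exp ((Complex.I * (Real.pi / 4 : ℝ)) • Hhtil N) *
        NormedSpace.exp ((Complex.I * (Real.pi / 4 : ℝ)) • HJtil N)) ^ (N + 1) *
          maj (N + 2) (2 * N + 3) *
        ((NormedSpace.exp ((Complex.I * (Real.pi / 4 : ℝ)) • Hhtil N) *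
          NormedSpace.exp ((Complex.I * (Real.pi / 4 : ℝ)) • HJtil N)) ^ (N + 1))ᴴ =
      maj (N + 2) (2 * N + 3) ∧
    ∀ k : ℕ, 1 ≤ k → k ≤ 2 * N + 2 →
      (NormedSpace.exp ((Complex.I * (Real.pi / 4 : ℝ)) • Hhtil N) *
          NormedSpace.exp ((Complex.I * (Real.pi / 4 : ℝ)) • HJtil N)) ^ (N + 1) *
            maj (N + 2) k *
          ((NormedSpace.exp ((Complex.I * (Real.pi / 4 : ℝ)) • Hhtil N) *
            NormedSpace.exp ((Complex.I * (Real.pi / 4 : ℝ)) • HJtil N)) ^ (N + 1))ᴴ =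
        ((-1 : ℂ) ^ (k - 1)) • maj (N + 2) (2 * N + 3 - k) := by
  rw [Uop_eq N]
  have fixed : ∀ m : ℕ, m < 2*(N+2) → ¬(1 ≤ m ∧ m < 1 + 2*(N+1)) →
      ¬(2 ≤ m ∧ m < 2 + 2*N) →
      (Uop N)^(N+1) * maj (N+2) m * ((Uop N)^(N+1))ᴴ = maj (N+2) m := by
    intro m hm hJ hh
    have hc : Commute (Uop N) (maj (N+2) m) := by
      show Uop N * maj (N+2) m = maj (N+2) m * Uop N
      rw [Uop, mul_assoc, Eop_action (n := N+2) (c := 1) (N+1) (by omega) m hm,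
        if_neg hJ, ← mul_assoc,
        Eop_action (n := N+2) (c := 2) N (by omega) m hm, if_neg hh, mul_assoc]
    have hp := hc.pow_left (N+1)
    rw [hp.eq, mul_assoc, Uop_pow_unitary, mul_one]
  refine ⟨?_, ?_, ?_⟩
  · exact fixed 0 (by omega) (by omega) (by omega)
  · exact fixed (2*N+3) (by omega) (by omega) (by omega)
  · intro k hk1 hk2
    have happ := U_pow_action N (N+1) (le_refl _) k hk1 hk2
    have hF : Fidx N (N+1) k = 2*N+3-k := by
      rw [Fidx]; split_ifs <;> omega
    have hS : Ssign (N+1) k = (-1:ℂ)^(k-1) := by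
      rw [Ssign]
      by_cases hk : k % 2 = 0
      · rw [if_pos (show k % 2 = 0 ∧ k ≤ 2*(N+1) by omega),
          (Nat.odd_iff.mpr (show (k-1) % 2 = 1 by omega)).neg_one_pow]
      · rw [if_neg (by omega),
          (Nat.even_iff.mpr (show (k-1) % 2 = 0 by omega)).neg_one_pow]
    rw [happ, hF, hS, smul_mul_assoc, mul_assoc, Uop_pow_unitary, mul_one]

end
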